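/- Let F = (A, R) be a finite AAF with n = |A| and adjacency matrix M over ℚ. For arguments a, b: a ⪰^dbs_F b holds if and only if either (i) for all i with 1 ≤ i ≤ 2n − 1 the column sums of M^i at a and b agree, or (ii) at the smallest i ≤ 2n − 1 where they differ, the column sum at a is smaller than at b when i is odd, and larger when i is even. -/

import Mathlib

/-- The number of walks of length `i` ending in `v`: tuples `(z_1, …, z_i, v)`
with all consecutive pairs edges of `E` (the attack relation). -/
def walkCount {V : Type*} [Fintype V] [DecidableEq V]
    (E : V → V → Prop) [DecidableRel E] (i : ℕ) (v : V) : ℕ :=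
  Fintype.card {f : Fin (i + 1) → V //
    (∀ j : Fin i, E (f j.castSucc) (f j.succ)) ∧ f (Fin.last i) = v}

/-- The discussion count `Dis_i(x)`. -/
def Dis {V : Type*} [Fintype V] [DecidableEq V]
    (E : V → V → Prop) [DecidableRel E] (i : ℕ) (x : V) : ℤ :=
  if Odd i then -(walkCount E i x : ℤ) else (walkCount E i x : ℤ)

/-- `a ⪰^dbs b`: the sequence `(Dis_i(a))_{i ≥ 1}` is lexicographically ≥ `(Dis_i(b))_{i ≥ 1}`. -/
def dbsGE {V : Type*} [Fintype V] [DecidableEq V]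
    (E : V → V → Prop) [DecidableRel E] (a b : V) : Prop :=
  (∀ i : ℕ, 1 ≤ i → Dis E i a = Dis E i b) ∨
    ∃ k : ℕ, 1 ≤ k ∧ Dis E k a > Dis E k b ∧
      ∀ j : ℕ, 1 ≤ j → j < k → Dis E j a = Dis E j b

lemma walkCount_zero {V : Type*} [Fintype V] [DecidableEq V]
    (E : V → V → Prop) [DecidableRel E] (v : V) : walkCount E 0 v = 1 := by
  rw [walkCount, Fintype.card_eq_one_iff]
  refine ⟨⟨fun _ => v, fun j => j.elim0, rfl⟩, ?_⟩
  rintro ⟨f, hf, hv⟩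
  ext x
  have hx := x.isLt
  have : x = Fin.last 0 := Fin.ext (by omega)
  simpa [this] using hv

lemma walkCount_succ {V : Type*} [Fintype V] [DecidableEq V]
    (E : V → V → Prop) [DecidableRel E] (i : ℕ) (v : V) :
    walkCount E (i + 1) v = ∑ w : V, if E w v then walkCount E i w else 0 := by
  classical
  rw [walkCount, Fintype.card_subtype]
  rw [Finset.card_eq_sum_card_fiberwise
    (f := fun f : Fin (i + 2) → V => f (Fin.last i).castSucc) (t := Finset.univ)
    (fun f _ => Finset.mem_univ _)]
  refine Finset.sum_congr rfl fun w _ => ?_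
  by_cases hE : E w v
  · rw [if_pos hE, walkCount, Fintype.card_subtype]
    refine Finset.card_nbij' (fun f => Fin.init f) (fun g => Fin.snoc g v) ?_ ?_ ?_ ?_
    · intro f hf
      simp only [Finset.mem_coe, Finset.mem_filter, Finset.mem_univ, true_and] at hf ⊢
      obtain ⟨⟨hedge, hlast⟩, hw⟩ := hf
      refine ⟨fun j => ?_, hw⟩
      have := hedge j.castSucc
      simpa [Fin.init] using this
    · intro g hg
      simp only [Finset.mem_coe, Finset.mem_filter, Finset.mem_univ, true_and] at hg ⊢
      obtain ⟨hedge, hlast⟩ := hg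
      refine ⟨⟨fun j => ?_, by simp⟩, by simp [hlast]⟩
      refine Fin.lastCases ?_ (fun k => ?_) j
      · simpa [Fin.succ_last, hlast] using hE
      · have := hedge k
        rw [Fin.succ_castSucc]
        simp only [Fin.snoc_castSucc]
        exact this
    · intro f hf
      simp only [Finset.mem_coe, Finset.mem_filter, Finset.mem_univ, true_and] at hf
      obtain ⟨⟨hedge, hlast⟩, hw⟩ := hf
      rw [← hlast]
      exact Fin.snoc_init_self f
    · intro g hg
      simp
  · rw [if_neg hE]
    rw [Finset.card_eq_zero, Finset.filter_eq_empty_iff]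
    intro f hf
    simp only [Finset.mem_filter, Finset.mem_univ, true_and] at hf
    obtain ⟨hedge, hlast⟩ := hf
    intro hw
    apply hE
    have := hedge (Fin.last i)
    rwa [hw, Fin.succ_last, hlast] at this

lemma colsum_eq {V : Type*} [Fintype V] [DecidableEq V]
    (R : V → V → Prop) [DecidableRel R]
    (M : Matrix V V ℚ) (hM : ∀ x y, M x y = if R x y then 1 else 0) :
    ∀ (i : ℕ) (v : V), ((walkCount R i v : ℚ)) = ∑ u : V, (M ^ i) u v := by
  intro i
  induction i with
  | zero =>
    intro v
    simp [walkCount_zero, Matrix.one_apply]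
  | succ i ih =>
    intro v
    rw [walkCount_succ, pow_succ]
    push_cast
    have : ∀ u : V, (M ^ i * M) u v = ∑ w : V, (M ^ i) u w * M w v := fun u => rfl
    simp only [this]
    rw [Finset.sum_comm]
    refine Finset.sum_congr rfl fun w _ => ?_
    rw [← Finset.sum_mul, ← ih w, hM]
    by_cases h : R w v <;> simp [h]

lemma charpoly_ext {V : Type*} [Fintype V] [DecidableEq V]
    (M : Matrix V V ℚ) (a b : V)
    (h : ∀ i : ℕ, i < Fintype.card V → ∑ u : V, (M ^ i) u a = ∑ u : V, (M ^ i) u b) :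
    ∀ i : ℕ, ∑ u : V, (M ^ i) u a = ∑ u : V, (M ^ i) u b := by
  classical
  set n := Fintype.card V with hn
  set p := M.charpoly with hp
  have hmonic : p.Monic := M.charpoly_monic
  have hdeg : p.natDegree = n := M.charpoly_natDegree_eq_dim
  have h0 : (Polynomial.aeval M) p = 0 := M.aeval_self_charpoly
  have hsum : ∑ j ∈ Finset.range (n + 1), p.coeff j • M ^ j = 0 := by
    rw [← h0, Polynomial.aeval_eq_sum_range' (by omega : p.natDegree < n + 1)]
  set s : ℕ → ℚ := fun i => (∑ u : V, (M ^ i) u a) - ∑ u : V, (M ^ i) u b with hs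
  have hrec : ∀ m : ℕ, s (m + n) = -∑ j ∈ Finset.range n, p.coeff j * s (m + j) := by
    intro m
    have hmul : ∑ j ∈ Finset.range (n + 1), p.coeff j • (M ^ (m + j)) = 0 := by
      calc ∑ j ∈ Finset.range (n + 1), p.coeff j • (M ^ (m + j))
          = M ^ m * ∑ j ∈ Finset.range (n + 1), p.coeff j • M ^ j := by
            rw [Finset.mul_sum]
            refine Finset.sum_congr rfl fun j _ => ?_
            rw [Matrix.mul_smul, ← pow_add]
        _ = 0 := by rw [hsum, mul_zero]
    -- apply the linear functional N ↦ ∑ u, N u a - ∑ u, N u b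
    have happ : ∑ j ∈ Finset.range (n + 1), p.coeff j * s (m + j) = 0 := by
      have := congrArg (fun N : Matrix V V ℚ => (∑ u : V, N u a) - ∑ u : V, N u b) hmul
      simp only [Matrix.sum_apply, Matrix.smul_apply, smul_eq_mul, Matrix.zero_apply,
        Finset.sum_const_zero, sub_zero] at this
      rw [← this]
      simp only [hs, mul_sub, Finset.mul_sum, Finset.sum_sub_distrib]
      congr 1 <;> exact Finset.sum_comm
    have hlead : p.coeff n = 1 := by
      have := hmonic.coeff_natDegree
      rwa [hdeg] at this
    rw [Finset.sum_range_succ, hlead, one_mul] at happ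
    linarith [happ]
  have hzero : ∀ i, i < n → s i = 0 := fun i hi => by simp [hs, h i hi]
  have hall : ∀ i, s i = 0 := by
    intro i
    induction i using Nat.strong_induction_on with
    | _ i ih =>
      by_cases hi : i < n
      · exact hzero i hi
      · have hn1 : n ≤ i := le_of_not_gt hi
        have : i = (i - n) + n := by omega
        rw [this, hrec (i - n)]
        have : ∀ j ∈ Finset.range n, p.coeff j * s (i - n + j) = 0 := by
          intro j hj
          rw [ih (i - n + j) (by simp at hj; omega), mul_zero]
        rw [Finset.sum_congr rfl this]
        simp
  intro i
  have := hall i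
  simp only [hs] at this
  linarith

theorem stmt14 {V : Type*} [Fintype V] [DecidableEq V]
    (R : V → V → Prop) [DecidableRel R]
    (M : Matrix V V ℚ) (hM : ∀ x y, M x y = if R x y then 1 else 0)
    (a b : V) :
    dbsGE R a b ↔
      ((∀ i : ℕ, 1 ≤ i → i ≤ 2 * Fintype.card V - 1 →
          ∑ u : V, (M ^ i) u a = ∑ u : V, (M ^ i) u b) ∨
        (∃ i : ℕ, 1 ≤ i ∧ i ≤ 2 * Fintype.card V - 1 ∧
          ∑ u : V, (M ^ i) u a ≠ ∑ u : V, (M ^ i) u b ∧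
          (∀ j : ℕ, 1 ≤ j → j < i →
            ∑ u : V, (M ^ j) u a = ∑ u : V, (M ^ j) u b) ∧
          (if Odd i then ∑ u : V, (M ^ i) u a < ∑ u : V, (M ^ i) u b
           else ∑ u : V, (M ^ i) u a > ∑ u : V, (M ^ i) u b))) := by
  have hwc := colsum_eq R M hM
  have hnat : ∀ i : ℕ, (walkCount R i a = walkCount R i b ↔
      ∑ u : V, (M ^ i) u a = ∑ u : V, (M ^ i) u b) := by
    intro i; rw [← hwc i a, ← hwc i b, Nat.cast_inj]
  have hlt : ∀ i : ℕ, (walkCount R i a < walkCount R i b ↔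
      ∑ u : V, (M ^ i) u a < ∑ u : V, (M ^ i) u b) := by
    intro i; rw [← hwc i a, ← hwc i b, Nat.cast_lt]
  have hlt' : ∀ i : ℕ, (walkCount R i b < walkCount R i a ↔
      ∑ u : V, (M ^ i) u b < ∑ u : V, (M ^ i) u a) := by
    intro i; rw [← hwc i a, ← hwc i b, Nat.cast_lt]
  have heq : ∀ i : ℕ, (Dis R i a = Dis R i b ↔
      ∑ u : V, (M ^ i) u a = ∑ u : V, (M ^ i) u b) := by
    intro i
    simp only [Dis]
    split_ifs with ho
    · rw [neg_inj, Nat.cast_inj]; exact hnat i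
    · rw [Nat.cast_inj]; exact hnat i
  have hgt : ∀ i : ℕ, (Dis R i a > Dis R i b ↔
      (if Odd i then ∑ u : V, (M ^ i) u a < ∑ u : V, (M ^ i) u b
       else ∑ u : V, (M ^ i) u a > ∑ u : V, (M ^ i) u b)) := by
    intro i
    simp only [Dis, gt_iff_lt]
    split_ifs with ho
    · rw [neg_lt_neg_iff, Nat.cast_lt]; exact hlt i
    · rw [Nat.cast_lt]; exact hlt' i
  have hn1 : 1 ≤ Fintype.card V := Fintype.card_pos_iff.mpr ⟨a⟩
  have key : (∀ i : ℕ, 1 ≤ i → i ≤ 2 * Fintype.card V - 1 →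
      ∑ u : V, (M ^ i) u a = ∑ u : V, (M ^ i) u b) →
      ∀ i : ℕ, ∑ u : V, (M ^ i) u a = ∑ u : V, (M ^ i) u b := by
    intro h
    apply charpoly_ext M a b
    intro i hi
    rcases Nat.eq_zero_or_pos i with h0 | h1
    · subst h0; simp [Matrix.one_apply]
    · exact h i h1 (by omega)
  constructor
  · rintro (h | ⟨k, hk1, hkgt, hkprev⟩)
    · left; exact fun i hi _ => (heq i).mp (h i hi)
    · right
      have hkle : k ≤ 2 * Fintype.card V - 1 := by
        by_contra hgt'
        push_neg at hgt'
        have hall := key (fun i hi1 hi2 => (heq i).mp (hkprev i hi1 (by omega)))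
        exact (ne_of_gt hkgt) ((heq k).mpr (hall k))
      exact ⟨k, hk1, hkle, fun hcs => (ne_of_gt hkgt) ((heq k).mpr hcs),
        fun j hj1 hjk => (heq j).mp (hkprev j hj1 hjk), (hgt k).mp hkgt⟩
  · rintro (h | ⟨i, hi1, hi2, hne, hprev, hif⟩)
    · left; exact fun i hi => (heq i).mpr (key h i)
    · right; exact ⟨i, hi1, (hgt i).mpr hif,
        fun j hj1 hji => (heq j).mpr (hprev j hj1 hji)⟩
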